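/- Let 𝔤 be a finite-dimensional real Lie algebra with trivial centre such that the ideal 𝔤^∞ := ⋂_{j≥1} 𝔤^j is abelian, and let 𝔠 := { x ∈ 𝔤 : [x, y] = 0 for all y ∈ 𝔤^∞ } be the centralizer of 𝔤^∞ in 𝔤. Then for every nilpotent Lie subalgebra 𝔥 ⊆ 𝔤 with 𝔥 + 𝔤^∞ = 𝔤 one has 𝔥 ∩ 𝔠 = {0}. -/

import Mathlib

/-- Let `𝔤` be a finite-dimensional real Lie algebra with trivial centre whose ideal
`𝔤^∞ := ⋂_{j≥1} 𝔤^j` is abelian, and let `𝔠` be the centralizer of `𝔤^∞` in `𝔤`.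
Then every nilpotent subalgebra `𝔥` with `𝔥 + 𝔤^∞ = 𝔤` satisfies `𝔥 ∩ 𝔠 = {0}`. -/
theorem stmt5 (L : Type*) [LieRing L] [LieAlgebra ℝ L] [Module.Finite ℝ L]
    (hcenter : LieAlgebra.center ℝ L = ⊥)
    (habelian : ∀ x ∈ (⨅ k, LieModule.lowerCentralSeries ℝ L L k),
      ∀ y ∈ (⨅ k, LieModule.lowerCentralSeries ℝ L L k), ⁅x, y⁆ = 0)
    (H : LieSubalgebra ℝ L) (hHnilp : LieRing.IsNilpotent H)
    (hsum : ∀ x : L, ∃ h ∈ H, ∃ y ∈ (⨅ k, LieModule.lowerCentralSeries ℝ L L k), x = h + y) :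
    ∀ x ∈ H, (∀ y ∈ (⨅ k, LieModule.lowerCentralSeries ℝ L L k), ⁅x, y⁆ = 0) → x = 0 := by
  set I := (⨅ k, LieModule.lowerCentralSeries ℝ L L k) with hI
  obtain ⟨N, hN⟩ := (LieModule.isNilpotent_iff ℝ H H).mp hHnilp
  -- Key downward induction
  have key : ∀ d j, N ≤ j + d → ∀ s : H,
      (∀ y ∈ I, ⁅(s : L), y⁆ = 0) → s ∈ LieModule.lowerCentralSeries ℝ H H j →
      (s : L) = 0 := by
    intro d
    induction d with
    | zero =>
      intro j hj s _ hs
      have : s ∈ LieModule.lowerCentralSeries ℝ H H N :=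
        LieModule.antitone_lowerCentralSeries ℝ H H (by omega : N ≤ j) hs
      rw [hN] at this
      simpa using congrArg (Subtype.val) this
    | succ d ih =>
      intro j hj s hcent hs
      have hbrack : ∀ g : L, ⁅g, (s : L)⁆ = 0 := by
        intro g
        obtain ⟨h, hh, y, hy, rfl⟩ := hsum g
        have hys : ⁅y, (s : L)⁆ = 0 := by
          rw [← lie_skew, hcent y hy, neg_zero]
        have hhs : ⁅h, (s : L)⁆ = 0 := by
          set h' : H := ⟨h, hh⟩
          have hmem : ⁅h', s⁆ ∈ LieModule.lowerCentralSeries ℝ H H (j + 1) := by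
            rw [LieModule.lowerCentralSeries_succ]
            exact LieSubmodule.lie_mem_lie (LieSubmodule.mem_top h') hs
          have hcent' : ∀ y ∈ I, ⁅((⁅h', s⁆ : H) : L), y⁆ = 0 := by
            intro y hy
            have hcoe : ((⁅h', s⁆ : H) : L) = ⁅h, (s : L)⁆ := rfl
            rw [hcoe, lie_lie, hcent y hy, lie_zero, zero_sub, neg_eq_zero]
            exact hcent _ (I.lie_mem hy)
          exact ih (j + 1) (by omega) _ hcent' hmem
        rw [add_lie, hys, hhs, add_zero]
      have : (s : L) ∈ LieAlgebra.center ℝ L :=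
        (LieModule.mem_maxTrivSubmodule ℝ L L _).mpr hbrack
      rw [hcenter] at this
      simpa using this
  intro x hx hxcent
  exact key N 0 (by omega) ⟨x, hx⟩ hxcent (by simp [LieModule.lowerCentralSeries_zero])
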